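/- For every ε ∈ (0,1) and every set Q ⊆ ℝ^d whose convex hull contains the unit ball B^d, there exists a finite subset Q_f ⊆ Q whose convex hull contains (1−ε)·B^d. -/

import Mathlib

open Metric RealInnerProductSpace

theorem finite_subset_approx (d : ℕ) (ε : ℝ) (hε : ε ∈ Set.Ioo (0 : ℝ) 1)
    (Q : Set (EuclideanSpace ℝ (Fin d)))
    (hQ : Metric.closedBall (0 : EuclideanSpace ℝ (Fin d)) 1 ⊆ convexHull ℝ Q) :
    ∃ F : Finset (EuclideanSpace ℝ (Fin d)), ↑F ⊆ Q ∧
      Metric.closedBall (0 : EuclideanSpace ℝ (Fin d)) (1 - ε) ⊆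
        convexHull ℝ (F : Set (EuclideanSpace ℝ (Fin d))) := by
  classical
  obtain ⟨hε0, hε1⟩ := hε
  have key : ∀ u : EuclideanSpace ℝ (Fin d), u ∈ Metric.closedBall (0 : EuclideanSpace ℝ (Fin d)) 1 →
      ∃ F : Finset (EuclideanSpace ℝ (Fin d)), ↑F ⊆ Q ∧
        u ∈ convexHull ℝ (F : Set (EuclideanSpace ℝ (Fin d))) := by
    intro u hu
    have h := hQ hu
    rw [convexHull_eq_union_convexHull_finite_subsets] at h
    simpa using h
  choose! F hFQ hFmem using key
  have hsphere_sub : Metric.sphere (0 : EuclideanSpace ℝ (Fin d)) 1 ⊆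
      Metric.closedBall (0 : EuclideanSpace ℝ (Fin d)) 1 := Metric.sphere_subset_closedBall
  have hcov : Metric.sphere (0 : EuclideanSpace ℝ (Fin d)) 1 ⊆
      ⋃ u ∈ Metric.sphere (0 : EuclideanSpace ℝ (Fin d)) 1, Metric.ball u ε := by
    intro u hu
    exact Set.mem_biUnion hu (Metric.mem_ball_self hε0)
  obtain ⟨b', hb'sub, hb'fin, hb'cov⟩ :=
    (isCompact_sphere (0 : EuclideanSpace ℝ (Fin d)) 1).elim_finite_subcover_image
      (fun u _ => Metric.isOpen_ball) hcov
  set G : Finset (EuclideanSpace ℝ (Fin d)) := F 0 ∪ hb'fin.toFinset.biUnion F with hG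
  have h0ball : (0 : EuclideanSpace ℝ (Fin d)) ∈ Metric.closedBall (0 : EuclideanSpace ℝ (Fin d)) 1 :=
    Metric.mem_closedBall_self (by norm_num)
  have hGQ : (G : Set (EuclideanSpace ℝ (Fin d))) ⊆ Q := by
    intro x hx
    simp only [hG, Finset.coe_union, Set.mem_union, Finset.coe_biUnion, Set.mem_iUnion,
      Finset.mem_coe, Finset.mem_biUnion] at hx
    rcases hx with hx | ⟨u, hu, hx⟩
    · exact hFQ 0 h0ball hx
    · have hu' : u ∈ b' := by simpa using hu
      exact hFQ u (hsphere_sub (hb'sub hu')) hx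
  have hsubG : ∀ u : EuclideanSpace ℝ (Fin d), u ∈ Metric.closedBall (0 : EuclideanSpace ℝ (Fin d)) 1 →
      (u = 0 ∨ u ∈ b') → u ∈ convexHull ℝ (G : Set (EuclideanSpace ℝ (Fin d))) := by
    intro u hu hcase
    refine convexHull_mono ?_ (hFmem u hu)
    intro y hy
    rcases hcase with rfl | hmem
    · exact Finset.mem_coe.2 (Finset.mem_union_left _ hy)
    · refine Finset.mem_coe.2 (Finset.mem_union_right _ ?_)
      exact Finset.mem_biUnion.2 ⟨u, by simpa using hmem, hy⟩
  refine ⟨G, hGQ, ?_⟩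
  intro x hx
  by_contra hxG
  have hclosed : IsClosed (convexHull ℝ (G : Set (EuclideanSpace ℝ (Fin d)))) :=
    G.finite_toSet.isClosed_convexHull (𝕜 := ℝ)
  obtain ⟨f, c, hfb, hfx⟩ :=
    geometric_hahn_banach_closed_point (convex_convexHull ℝ _) hclosed hxG
  have h0G : (0 : EuclideanSpace ℝ (Fin d)) ∈ convexHull ℝ (G : Set (EuclideanSpace ℝ (Fin d))) :=
    hsubG 0 h0ball (Or.inl rfl)
  have hc0 : (0 : ℝ) < c := by simpa using hfb 0 h0G
  have hfx0 : (0 : ℝ) < f x := lt_trans hc0 hfx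
  set v : EuclideanSpace ℝ (Fin d) :=
    (InnerProductSpace.toDual ℝ (EuclideanSpace ℝ (Fin d))).symm f with hv
  have hvinner : ∀ y : EuclideanSpace ℝ (Fin d), ⟪v, y⟫ = f y := fun y =>
    InnerProductSpace.toDual_symm_apply
  have hvne : v ≠ 0 := by
    intro h
    have : f x = 0 := by rw [← hvinner x, h, inner_zero_left]
    linarith
  have hvnorm : (0 : ℝ) < ‖v‖ := norm_pos_iff.2 hvne
  set w : EuclideanSpace ℝ (Fin d) := ‖v‖⁻¹ • v with hw
  have hwsphere : w ∈ Metric.sphere (0 : EuclideanSpace ℝ (Fin d)) 1 := by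
    simp [hw, norm_smul, abs_of_pos (inv_pos.2 hvnorm), inv_mul_cancel₀ hvnorm.ne']
  obtain ⟨u, hu, hudist⟩ := Set.mem_iUnion₂.1 (hb'cov hwsphere)
  have huG : u ∈ convexHull ℝ (G : Set (EuclideanSpace ℝ (Fin d))) :=
    hsubG u (hsphere_sub (hb'sub hu)) (Or.inr hu)
  have hfu : f u < c := hfb u huG
  have hvw : ⟪v, w⟫ = ‖v‖ := by
    rw [hw, real_inner_smul_right, real_inner_self_eq_norm_sq]
    field_simp
  have hdist : ‖w - u‖ < ε := by
    have := Metric.mem_ball.1 hudist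
    rwa [dist_eq_norm] at this
  have hlow : ‖v‖ * (1 - ε) < ⟪v, u⟫ := by
    have h1 : ⟪v, u⟫ = ‖v‖ - ⟪v, w - u⟫ := by
      rw [inner_sub_right, hvw]; ring
    have h2 : ⟪v, w - u⟫ ≤ ‖v‖ * ‖w - u‖ := real_inner_le_norm v (w - u)
    have h3 : ‖v‖ * ‖w - u‖ < ‖v‖ * ε := mul_lt_mul_of_pos_left hdist hvnorm
    nlinarith
  have hhigh : ⟪v, x⟫ ≤ ‖v‖ * (1 - ε) := by
    calc ⟪v, x⟫ ≤ ‖v‖ * ‖x‖ := real_inner_le_norm v x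
    _ ≤ ‖v‖ * (1 - ε) := by
        have hxn : ‖x‖ ≤ 1 - ε := by
          have := Metric.mem_closedBall.1 hx
          rwa [dist_zero_right] at this
        exact mul_le_mul_of_nonneg_left hxn hvnorm.le
  have hfux : f x ≤ f u := by
    rw [← hvinner x, ← hvinner u]
    linarith
  linarith
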